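/- Let (X,d,m) be a metric measure space with m globally doubling of doubling dimension Q, let o ∈ X, κ > 1, i ∈ ℤ, and let 0 < s ≤ t < ∞. Let μ_{s,t} be the measure whose density with respect to m is x ↦ m(B_{d(o,x)}(o))^{t/s−1} · d(o,x)^{−t}. Suppose U ⊆ X is a Borel set with U ⊆ A(o,κ^{i−1},κ^{i+1}) := B_{κ^{i+1}}(o) ∖ cl(B_{κ^{i−1}}(o)) and B_{ρ_i}(x) ⊆ U for some point x with d(o,x) = (κ^i + κ^{i−1})/2, where ρ_i := (κ^i − κ^{i−1})/4. Then C_e⁻¹ · m(B_{κ^{i−1}}(o))^{t/s} · κ^{−(i+1)t} ≤ μ_{s,t}(U) ≤ m(B_{κ^{i+1}}(o))^{t/s} · κ^{−(i−1)t}, where C_e := (16κ/(κ−1))^Q. -/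

import Mathlib

open MeasureTheory Metric Set Filter
open scoped ENNReal NNReal Topology

noncomputable section

/-- `g` is an upper gradient of `f`: along every rectifiable curve parametrized by arc length
(formalized as a `1`-Lipschitz curve defined on an interval `[0, L]`), the variation of `f`
between the endpoints is controlled by the line integral of `g` along the curve. -/
def IsUpperGradient {X : Type*} [MetricSpace X] (f : X → ℝ) (g : X → ℝ≥0∞) : Prop :=
  ∀ L : ℝ, 0 ≤ L → ∀ γ : ℝ → X, LipschitzOnWith 1 γ (Icc 0 L) →
    ENNReal.ofReal |f (γ L) - f (γ 0)| ≤ ∫⁻ u in Icc (0 : ℝ) L, g (γ u)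

/-- Membership in `L^p(X, m)` for a real exponent `p`. -/
def MemLpR {X : Type*} [MeasurableSpace X] (m : Measure X) (p : ℝ) (f : X → ℝ) : Prop :=
  AEMeasurable f m ∧ (∫⁻ x, ENNReal.ofReal |f x| ^ p ∂m) < ∞

/-- The Cheeger `p`-energy of `f`: the infimum of `liminf ∫ gₙ^p dm` over all sequences
`fₙ ∈ L^p` converging to `f` in `L^p` and upper gradients `gₙ` of `fₙ`. -/
def cheegerEnergy {X : Type*} [MetricSpace X] [MeasurableSpace X]
    (m : Measure X) (p : ℝ) (f : X → ℝ) : ℝ≥0∞ :=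
  ⨅ (F : ℕ → X → ℝ) (G : ℕ → X → ℝ≥0∞) (_ : ∀ n, MemLpR m p (F n))
    (_ : ∀ n, IsUpperGradient (F n) (G n))
    (_ : Tendsto (fun n => ∫⁻ x, ENNReal.ofReal |F n x - f x| ^ p ∂m) atTop (𝓝 0)),
    liminf (fun n => ∫⁻ x, G n x ^ p ∂m) atTop

/-- `f ∈ H^{1,p}(X, d, m)`: `f ∈ L^p` and its Cheeger `p`-energy is finite. -/
def MemH1 {X : Type*} [MetricSpace X] [MeasurableSpace X]
    (m : Measure X) (p : ℝ) (f : X → ℝ) : Prop :=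
  MemLpR m p f ∧ cheegerEnergy m p f < ∞

/-- The measure `m` is finite and nonzero on balls of finite nonzero radius. -/
def BallRegular {X : Type*} [MetricSpace X] [MeasurableSpace X] (m : Measure X) : Prop :=
  ∀ (x : X) (r : ℝ), 0 < r → m (ball x r) ≠ 0 ∧ m (ball x r) < ∞

/-- `m` is globally doubling with doubling dimension `Q`, i.e. doubling constant `2 ^ Q`. -/
def DoublingOfDim {X : Type*} [MetricSpace X] [MeasurableSpace X]
    (m : Measure X) (Q : ℝ) : Prop :=
  ∀ (x : X) (r : ℝ), 0 < r → m (ball x (2 * r)) ≤ ENNReal.ofReal (2 ^ Q) * m (ball x r)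

/-- The weak `(p,p)` Poincaré inequality with constants `C_P > 0` and `lam ≥ 1`. -/
def WeakPoincare {X : Type*} [MetricSpace X] [MeasurableSpace X]
    (m : Measure X) (p C_P lam : ℝ) : Prop :=
  ∀ f : X → ℝ, LocallyIntegrable f m →
    ∀ g : X → ℝ≥0∞, Measurable g → IsUpperGradient f g → (∫⁻ x, g x ^ p ∂m) < ∞ →
      ∀ (x : X) (r : ℝ), 0 < r →
        ((∫⁻ y in ball x r, ENNReal.ofReal |f y - (⨍ z in ball x r, f z ∂m)| ^ p ∂m) /
            m (ball x r)) ^ (1 / p) ≤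
          ENNReal.ofReal (C_P * r) *
            ((∫⁻ y in ball x (lam * r), g y ^ p ∂m) / m (ball x (lam * r))) ^ (1 / p)

/-- Reverse doubling at the point `o`: `m(B_R(o))/m(B_r(o)) ≥ C_o (R/r)^η` for `0 < r ≤ R`. -/
def ReverseDoubling {X : Type*} [MetricSpace X] [MeasurableSpace X]
    (m : Measure X) (o : X) (C_o η : ℝ) : Prop :=
  ∀ r R : ℝ, 0 < r → r ≤ R → ENNReal.ofReal (C_o * (R / r) ^ η) * m (ball o r) ≤ m (ball o R)

/-- The weighted measure `μ_{s,t}` with density `m(B_{d(o,x)}(o))^{t/s-1} · d(o,x)^{-t}`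
with respect to `m`. -/
def weightMeasure {X : Type*} [MetricSpace X] [MeasurableSpace X]
    (m : Measure X) (o : X) (s t : ℝ) : Measure X :=
  m.withDensity fun x => m (ball o (dist o x)) ^ (t / s - 1) * ENNReal.ofReal (dist o x) ^ (-t)

/-- A geodesic metric space: any two points are joined by a curve of length equal to their
distance (formalized: a `1`-Lipschitz curve defined on `[0, d(x,y)]` from `x` to `y`). -/
def IsGeodesicSpace (X : Type*) [MetricSpace X] : Prop :=
  ∀ x y : X, ∃ γ : ℝ → X, γ 0 = x ∧ γ (dist x y) = y ∧ LipschitzOnWith 1 γ (Icc 0 (dist x y))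

/-- A good covering of the doubly measured metric space `(X, d, m, μ)`, indexed by `I`,
with parameters `Q₁` and `Q₂`. -/
structure GoodCovering {X : Type*} [MetricSpace X] [MeasurableSpace X]
    (m μ : Measure X) (I : Type*) (Q₁ Q₂ : ℝ) where
  U : I → Set X
  Ustar : I → Set X
  Usharp : I → Set X
  countable : Countable I
  measurable_U : ∀ i, MeasurableSet (U i)
  measurable_Ustar : ∀ i, MeasurableSet (Ustar i)
  measurable_Usharp : ∀ i, MeasurableSet (Usharp i)
  finite_m : ∀ i, m (Usharp i) < ∞
  finite_mu : ∀ i, μ (Usharp i) < ∞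
  U_subset_Ustar : ∀ i, U i ⊆ Ustar i
  Ustar_subset_Usharp : ∀ i, Ustar i ⊆ Usharp i
  cover_m : m (univ \ ⋃ i, U i) = 0
  cover_mu : μ (univ \ ⋃ i, U i) = 0
  overlap_finite : ∀ i, {j : I | (closure (Usharp j) ∩ closure (Usharp i)).Nonempty}.Finite
  overlap_card : ∀ i,
    (Nat.card {j : I | (closure (Usharp j) ∩ closure (Usharp i)).Nonempty} : ℝ) ≤ Q₁
  chain : ∀ i j : I, (closure (U i) ∩ closure (U j)).Nonempty →
    ∃ k : I, U i ∪ U j ⊆ Ustar k ∧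
      m (Ustar k) ≤ ENNReal.ofReal Q₂ * min (m (U i)) (m (U j)) ∧
      μ (Ustar k) ≤ ENNReal.ofReal Q₂ * min (μ (U i)) (μ (U j))


lemma iter_doubling {X : Type*} [MetricSpace X] [MeasurableSpace X]
    {m : Measure X} {Q : ℝ} (hdb : DoublingOfDim m Q) (x : X) (r : ℝ) (hr : 0 < r) :
    ∀ n : ℕ, m (ball x (2 ^ n * r)) ≤ (ENNReal.ofReal (2 ^ Q)) ^ n * m (ball x r) := by
  intro n
  induction n with
  | zero => simp
  | succ n ih =>
    have h2 : (2:ℝ) ^ (n+1) * r = 2 * (2 ^ n * r) := by ring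
    rw [h2]
    calc m (ball x (2 * (2 ^ n * r))) ≤ ENNReal.ofReal (2 ^ Q) * m (ball x (2 ^ n * r)) :=
          hdb x _ (by positivity)
      _ ≤ ENNReal.ofReal (2 ^ Q) * ((ENNReal.ofReal (2 ^ Q)) ^ n * m (ball x r)) :=
          mul_le_mul_right ih _
      _ = (ENNReal.ofReal (2 ^ Q)) ^ (n+1) * m (ball x r) := by ring


/-- Two-sided bounds for the `μ_{s,t}`-measure of a piece of an annulus
containing a definite ball. -/
theorem weighted_measure_annulus_piece_bounds
    {X : Type*} [MetricSpace X] [MeasurableSpace X] [BorelSpace X]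
    (m : Measure X) (hm : BallRegular m)
    (Q : ℝ) (hdb : DoublingOfDim m Q)
    (o : X) (κ : ℝ) (hκ : 1 < κ) (i : ℤ)
    (s t : ℝ) (hs : 0 < s) (hst : s ≤ t)
    (U : Set X) (hU : MeasurableSet U)
    (hUsub : U ⊆ ball o (κ ^ (i + 1)) \ closure (ball o (κ ^ (i - 1))))
    (x : X) (hx : dist o x = (κ ^ i + κ ^ (i - 1)) / 2)
    (hball : ball x ((κ ^ i - κ ^ (i - 1)) / 4) ⊆ U) :
    ENNReal.ofReal (((16 * κ / (κ - 1)) ^ Q)⁻¹) *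
        (m (ball o (κ ^ (i - 1))) ^ (t / s) * ENNReal.ofReal (κ ^ (-((i : ℝ) + 1) * t))) ≤
      weightMeasure m o s t U ∧
    weightMeasure m o s t U ≤
      m (ball o (κ ^ (i + 1))) ^ (t / s) * ENNReal.ofReal (κ ^ (-((i : ℝ) - 1) * t)) := by
  have hκ0 : (0:ℝ) < κ := lt_trans one_pos hκ
  have hκ1 : (0:ℝ) < κ - 1 := by linarith
  have hr1 : (0:ℝ) < κ ^ (i-1) := zpow_pos hκ0 _
  have hr2 : (0:ℝ) < κ ^ (i+1) := zpow_pos hκ0 _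
  have h12 : κ ^ (i-1) < κ ^ i := zpow_lt_zpow_right₀ hκ (by omega)
  have h2i : κ ^ i < κ ^ (i+1) := zpow_lt_zpow_right₀ hκ (by omega)
  set ρ : ℝ := (κ ^ i - κ ^ (i-1)) / 4 with hρdef
  have hρ : 0 < ρ := by rw [hρdef]; linarith
  have ht0 : 0 < t := lt_of_lt_of_le hs hst
  have hts1 : 0 ≤ t / s - 1 := by
    have : 1 ≤ t / s := (one_le_div hs).mpr hst
    linarith
  obtain ⟨hB1ne, hB1lt⟩ := hm o (κ ^ (i-1)) hr1
  obtain ⟨hB2ne, hB2lt⟩ := hm o (κ ^ (i+1)) hr2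
  -- 0 ≤ Q
  have hQ0 : 0 ≤ Q := by
    obtain ⟨h1ne, h1lt⟩ := hm o 1 one_pos
    have h1 : m (ball o 1) ≤ ENNReal.ofReal (2 ^ Q) * m (ball o 1) :=
      le_trans (measure_mono (ball_subset_ball (by norm_num))) (hdb o 1 one_pos)
    have h2 : (1:ℝ≥0∞) ≤ ENNReal.ofReal (2 ^ Q) := by
      by_contra hcon
      push_neg at hcon
      have hlt : ENNReal.ofReal (2 ^ Q) * m (ball o 1) < 1 * m (ball o 1) := by
        rw [mul_comm, mul_comm 1]; exact ENNReal.mul_lt_mul_right h1ne h1lt.ne hcon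
      rw [one_mul] at hlt
      exact absurd h1 (not_le.mpr hlt)
    by_contra hQneg
    push_neg at hQneg
    have : (2:ℝ) ^ Q < 1 := Real.rpow_lt_one_of_one_lt_of_neg one_lt_two hQneg
    have h3 : ENNReal.ofReal (2 ^ Q) < 1 := by
      rw [← ENNReal.ofReal_one]
      exact ENNReal.ofReal_lt_ofReal_iff_of_nonneg (by positivity) |>.mpr this
    exact absurd (lt_of_le_of_lt h2 h3) (lt_irrefl _)
  -- membership bounds
  have hmem : ∀ y ∈ U, κ ^ (i-1) ≤ dist o y ∧ dist o y < κ ^ (i+1) := by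
    intro y hy
    obtain ⟨hy1, hy2⟩ := hUsub hy
    rw [mem_ball] at hy1
    constructor
    · by_contra h
      push_neg at h
      exact hy2 (subset_closure (mem_ball.mpr (by rw [dist_comm]; exact h)))
    · rw [dist_comm]; exact hy1
  -- exponent algebra on reals
  have hzpow : ∀ j : ℤ, ((κ ^ j : ℝ)) ^ (-t) = κ ^ (-(j:ℝ) * t) := by
    intro j
    rw [← Real.rpow_intCast κ j, ← Real.rpow_mul hκ0.le]
    ring_nf
  -- rpow collapse
  have hcollapse : ∀ r' : ℝ, 0 < r' →
      m (ball o r') ^ (t/s - 1) * m (ball o r') = m (ball o r') ^ (t/s) := by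
    intro r' hr'
    obtain ⟨hne, hlt⟩ := hm o r' hr'
    nth_rewrite 2 [← ENNReal.rpow_one (m (ball o r'))]
    rw [← ENNReal.rpow_add _ _ hne hlt.ne]
    norm_num
  constructor
  · -- LOWER BOUND
    -- choose n
    set x0 : ℝ := 2 * (κ + 3) / (κ - 1) with hx0def
    have hx0pos : 0 < x0 := by positivity
    have hx0ge1 : 1 ≤ x0 := by
      rw [hx0def, le_div_iff₀ hκ1]; linarith
    set n : ℕ := ⌈Real.logb 2 x0⌉₊ with hndef
    have hlogb0 : 0 ≤ Real.logb 2 x0 := Real.logb_nonneg one_lt_two hx0ge1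
    have hx0le : x0 ≤ 2 ^ n := by
      calc x0 = 2 ^ Real.logb 2 x0 := (Real.rpow_logb two_pos (by norm_num) hx0pos).symm
        _ ≤ 2 ^ ((n:ℝ)) := Real.rpow_le_rpow_of_exponent_le one_le_two (Nat.le_ceil _)
        _ = 2 ^ n := Real.rpow_natCast 2 n
    have h2n_le : (2:ℝ) ^ n ≤ 2 * x0 := by
      have hn : (n:ℝ) ≤ Real.logb 2 x0 + 1 := (Nat.ceil_lt_add_one hlogb0).le
      calc (2:ℝ) ^ n = 2 ^ ((n:ℝ)) := (Real.rpow_natCast 2 n).symm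
        _ ≤ 2 ^ (Real.logb 2 x0 + 1) := Real.rpow_le_rpow_of_exponent_le one_le_two hn
        _ = 2 ^ Real.logb 2 x0 * 2 := by rw [Real.rpow_add two_pos, Real.rpow_one]
        _ = 2 * x0 := by rw [Real.rpow_logb two_pos (by norm_num) hx0pos]; ring
    have h2x0le : 2 * x0 ≤ 16 * κ / (κ - 1) := by
      have h4 : 2 * x0 = 4 * (κ + 3) / (κ - 1) := by rw [hx0def]; ring
      rw [h4, div_le_div_iff₀ hκ1 hκ1]
      nlinarith
    -- κ^i = κ^(i-1) * κ
    have hzz : κ ^ i = κ ^ (i-1) * κ := by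
      have : i = (i - 1) + 1 := by ring
      rw [this, zpow_add_one₀ (ne_of_gt hκ0)]
      ring_nf
    -- ball o (κ^(i-1)) ⊆ ball x (2^n * ρ)
    have hsub : ball o (κ ^ (i-1)) ⊆ ball x (2 ^ n * ρ) := by
      intro y hy
      rw [mem_ball] at hy ⊢
      have h1 : dist y x ≤ dist y o + dist o x := dist_triangle y o x
      have hx0ρ : x0 * ρ = κ ^ (i-1) + (κ ^ i + κ ^ (i-1)) / 2 := by
        rw [hx0def, hρdef, hzz]
        field_simp
        ring
      have : x0 * ρ ≤ 2 ^ n * ρ := mul_le_mul_of_nonneg_right hx0le hρ.le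
      rw [hx0ρ, hx] at *
      calc dist y x ≤ dist y o + (κ ^ i + κ ^ (i-1)) / 2 := by rw [← hx]; exact h1
        _ < κ ^ (i-1) + (κ ^ i + κ ^ (i-1)) / 2 := by linarith
        _ ≤ 2 ^ n * ρ := by linarith [mul_le_mul_of_nonneg_right hx0le hρ.le, hx0ρ]
    -- doubling bound
    have hdoub := iter_doubling hdb x ρ hρ n
    have hCepos : (0:ℝ) < (16 * κ / (κ - 1)) ^ Q := Real.rpow_pos_of_pos (by positivity) _
    have hCe : (ENNReal.ofReal (2 ^ Q)) ^ n ≤ ENNReal.ofReal ((16 * κ / (κ - 1)) ^ Q) := by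
      rw [← ENNReal.ofReal_pow (by positivity)]
      apply ENNReal.ofReal_le_ofReal
      have heq : ((2:ℝ) ^ Q) ^ n = ((2:ℝ) ^ n) ^ Q := by
        rw [← Real.rpow_natCast ((2:ℝ) ^ Q) n, ← Real.rpow_mul (by norm_num),
          ← Real.rpow_natCast (2:ℝ) n, ← Real.rpow_mul (by norm_num), mul_comm]
      rw [heq]
      exact Real.rpow_le_rpow (by positivity) (le_trans h2n_le h2x0le) hQ0
    have hballlow : ENNReal.ofReal (((16 * κ / (κ - 1)) ^ Q)⁻¹) * m (ball o (κ ^ (i-1)))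
        ≤ m (ball x ρ) := by
      have hchain : m (ball o (κ ^ (i-1))) ≤
          ENNReal.ofReal ((16 * κ / (κ - 1)) ^ Q) * m (ball x ρ) :=
        le_trans (measure_mono hsub) (le_trans hdoub (mul_le_mul_left hCe _))
      rw [ENNReal.ofReal_inv_of_pos hCepos]
      calc (ENNReal.ofReal ((16 * κ / (κ - 1)) ^ Q))⁻¹ * m (ball o (κ ^ (i-1)))
          ≤ (ENNReal.ofReal ((16 * κ / (κ - 1)) ^ Q))⁻¹ *
            (ENNReal.ofReal ((16 * κ / (κ - 1)) ^ Q) * m (ball x ρ)) :=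
            mul_le_mul_right hchain _
        _ = m (ball x ρ) := by
            rw [← mul_assoc, ENNReal.inv_mul_cancel (by simp [hCepos]) ENNReal.ofReal_ne_top,
              one_mul]
    -- integral lower bound
    set C1 : ℝ≥0∞ := m (ball o (κ ^ (i-1))) ^ (t/s - 1) *
      ENNReal.ofReal ((κ ^ (i+1) : ℝ) ^ (-t)) with hC1def
    have hint : C1 * m (ball x ρ) ≤ weightMeasure m o s t U := by
      rw [weightMeasure, withDensity_apply _ hU]
      calc C1 * m (ball x ρ) = ∫⁻ _ in ball x ρ, C1 ∂m := (setLIntegral_const _ _).symm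
        _ ≤ ∫⁻ y in ball x ρ,
            m (ball o (dist o y)) ^ (t/s - 1) * ENNReal.ofReal (dist o y) ^ (-t) ∂m := by
            apply setLIntegral_mono' measurableSet_ball
            intro y hy
            have hyU : y ∈ U := hball hy
            obtain ⟨hd1, hd2⟩ := hmem y hyU
            have hdpos : 0 < dist o y := lt_of_lt_of_le hr1 hd1
            rw [hC1def]
            apply mul_le_mul'
            · exact ENNReal.rpow_le_rpow (measure_mono (ball_subset_ball hd1)) hts1
            · rw [ENNReal.ofReal_rpow_of_pos hdpos]
              exact ENNReal.ofReal_le_ofReal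
                (Real.rpow_le_rpow_of_nonpos hdpos hd2.le (neg_nonpos.mpr ht0.le))
        _ ≤ ∫⁻ y in U,
            m (ball o (dist o y)) ^ (t/s - 1) * ENNReal.ofReal (dist o y) ^ (-t) ∂m :=
            lintegral_mono_set hball
    -- combine
    calc ENNReal.ofReal (((16 * κ / (κ - 1)) ^ Q)⁻¹) *
          (m (ball o (κ ^ (i - 1))) ^ (t / s) * ENNReal.ofReal (κ ^ (-((i : ℝ) + 1) * t)))
        = C1 * (ENNReal.ofReal (((16 * κ / (κ - 1)) ^ Q)⁻¹) * m (ball o (κ ^ (i-1)))) := by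
          rw [hC1def]
          have he : ((κ ^ (i+1) : ℝ)) ^ (-t) = κ ^ (-((i:ℝ) + 1) * t) := by
            rw [hzpow (i+1)]; push_cast; ring_nf
          rw [he, ← hcollapse _ hr1]
          ring
      _ ≤ C1 * m (ball x ρ) := mul_le_mul_right hballlow _
      _ ≤ weightMeasure m o s t U := hint
  · -- UPPER BOUND
    set C2 : ℝ≥0∞ := m (ball o (κ ^ (i+1))) ^ (t/s - 1) *
      ENNReal.ofReal ((κ ^ (i-1) : ℝ) ^ (-t)) with hC2def
    have hUb2 : U ⊆ ball o (κ ^ (i+1)) := fun y hy => (hUsub hy).1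
    have hint : weightMeasure m o s t U ≤ C2 * m (ball o (κ ^ (i+1))) := by
      rw [weightMeasure, withDensity_apply _ hU]
      calc ∫⁻ y in U,
            m (ball o (dist o y)) ^ (t/s - 1) * ENNReal.ofReal (dist o y) ^ (-t) ∂m
          ≤ ∫⁻ _ in U, C2 ∂m := by
            apply setLIntegral_mono' hU
            intro y hy
            obtain ⟨hd1, hd2⟩ := hmem y hy
            have hdpos : 0 < dist o y := lt_of_lt_of_le hr1 hd1
            rw [hC2def]
            apply mul_le_mul'
            · exact ENNReal.rpow_le_rpow (measure_mono (ball_subset_ball hd2.le)) hts1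
            · rw [ENNReal.ofReal_rpow_of_pos hdpos]
              exact ENNReal.ofReal_le_ofReal
                (Real.rpow_le_rpow_of_nonpos hr1 hd1 (neg_nonpos.mpr ht0.le))
        _ = C2 * m U := setLIntegral_const _ _
        _ ≤ C2 * m (ball o (κ ^ (i+1))) := mul_le_mul_right (measure_mono hUb2) _
    calc weightMeasure m o s t U ≤ C2 * m (ball o (κ ^ (i+1))) := hint
      _ = m (ball o (κ ^ (i + 1))) ^ (t / s) * ENNReal.ofReal (κ ^ (-((i : ℝ) - 1) * t)) := by
          rw [hC2def]
          have he : ((κ ^ (i-1) : ℝ)) ^ (-t) = κ ^ (-((i:ℝ) - 1) * t) := by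
            rw [hzpow (i-1)]; push_cast; ring_nf
          rw [he, ← hcollapse _ hr2]
          ring
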